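/- Multiplication (distribution) formula: for any positive odd integer m, x ∈ ℤ_p and k ∈ ℕ, ∫_{ℤ_p} q^{−t} ((1−q^{x+t})/(1−q))^k dμ_q(t) = ((1−q^m)/(1−q))^k · (1+q)/(1+q^m) · Σ_{i=0}^{m−1} (−1)^i ∫_{ℤ_p} ((1−q^{m(t+(x+i)/m)})/(1−q^m))^k q^{−mt} dμ_{q^m}(t). -/

import Mathlib

open Filter Topology Finset

variable (p : ℕ) [Fact p.Prime]

/-- Riemann sums for the modified `q`-Euler numbers
`E_{n,q} = ∫_{ℤ_p} ((1-q^x)/(1-q))^n q^{-x} dμ_q(x)`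
(the factor `q^{-x}` cancels the `q^x` of the measure `(-q)^x`, leaving `(-1)^x`). -/
noncomputable def modEulerSum (q : ℚ_[p]) (n N : ℕ) : ℚ_[p] :=
  (1 + q) / (1 + q ^ p ^ N) *
    ∑ x ∈ range (p ^ N), ((1 - q ^ x) / (1 - q)) ^ n * (-1 : ℚ_[p]) ^ x

/-- The modified `q`-Euler numbers `E_{n,q}`, as the limit of the Riemann sums. -/
noncomputable def modEuler (q : ℚ_[p]) (n : ℕ) : ℚ_[p] :=
  limUnder atTop (modEulerSum p q n)

/-- `q ^ x` for a `p`-adic integer exponent `x`, as the limit of `q ^ (x mod p^n)`. -/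
noncomputable def qpowZ (q : ℚ_[p]) (x : ℤ_[p]) : ℚ_[p] :=
  limUnder atTop (fun n => q ^ x.appr n)

/-- `q ^ x` for a rational exponent `x` lying in `ℤ_p` (junk value `1` otherwise). -/
noncomputable def qpowQ (q : ℚ_[p]) (x : ℚ) : ℚ_[p] :=
  if h : ‖(x : ℚ_[p])‖ ≤ 1 then qpowZ p q ⟨(x : ℚ_[p]), h⟩ else 1

/-- The `q`-Euler polynomial `E_{m,q}(x) = ∫_{ℤ_p} q^{-t} ((1-q^{x+t})/(1-q))^m dμ_q(t)`,
where `qx` stands for `q ^ x`. -/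
noncomputable def qEulerPoly (q : ℚ_[p]) (m : ℕ) (qx : ℚ_[p]) : ℚ_[p] :=
  limUnder atTop (fun N => (1 + q) / (1 + q ^ p ^ N) *
    ∑ t ∈ range (p ^ N), (q ^ t)⁻¹ * ((1 - qx * q ^ t) / (1 - q)) ^ m * (-q) ^ t)

/-- The Teichmüller character: `ω(a) = lim_n a ^ (p ^ n)`. -/
noncomputable def teich (a : ℕ) : ℚ_[p] :=
  limUnder atTop (fun n => (a : ℚ_[p]) ^ p ^ n)

/-- `u ^ s` for a `p`-adic integer exponent `s`. -/
noncomputable def padPow (u : ℚ_[p]) (s : ℤ_[p]) : ℚ_[p] :=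
  limUnder atTop (fun n => u ^ s.appr n)

/-- The `p`-adic binomial coefficient `C(s, j) = s(s-1)⋯(s-j+1)/j!`. -/
noncomputable def cchoose (s : ℚ_[p]) (j : ℕ) : ℚ_[p] :=
  (∏ i ∈ range j, (s - (i : ℚ_[p]))) / (j.factorial : ℚ_[p])

/-- The `p`-adic interpolating function
`T_q(s, a, N : q^N) = ω(a)⁻¹ ⟨a⟩_q^s ∑_{j≥0} C(s,j) q^{aj} ((1-q^N)/(1-q^a))^j E_{j,q^N}`. -/
noncomputable def Tq (q : ℚ_[p]) (s : ℤ_[p]) (a N : ℕ) : ℚ_[p] :=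
  (teich p a)⁻¹ * padPow p ((teich p a)⁻¹ * ((1 - q ^ a) / (1 - q))) s *
    ∑' j : ℕ, cchoose p (s : ℚ_[p]) j * q ^ (a * j) *
      ((1 - q ^ N) / (1 - q ^ a)) ^ j * modEuler p (q ^ N) j

/-- The `q`-analogue of the higher order Dedekind type DC sums
`S_{m,q}(h, k : q^l) = ∑_{M=1}^{k-1} (-1)^{M-1} ((1-q^M)/(1-q^k)) E_{m,q^l}({hM/k})`. -/
noncomputable def Smq (q : ℚ_[p]) (m h k l : ℕ) : ℚ_[p] :=
  ∑ M ∈ Ico 1 k, (-1 : ℚ_[p]) ^ (M - 1) * ((1 - q ^ M) / (1 - q ^ k)) *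
    qEulerPoly p (q ^ l) m (qpowQ p q ((l : ℚ) * Int.fract ((h * M : ℚ) / k)))

/-- The `p`-adic Dedekind type DC sums
`S_{p,q}(s : h, k : q^k) = ∑_{M=1}^{k-1} ((1-q^M)/(1-q)) (-1)^{M-1} T_q(s, hM, k : q^k)`. -/
noncomputable def Spq (q : ℚ_[p]) (s : ℤ_[p]) (h k : ℕ) : ℚ_[p] :=
  ∑ M ∈ Ico 1 k, ((1 - q ^ M) / (1 - q)) * (-1 : ℚ_[p]) ^ (M - 1) * Tq p q s (h * M) k

/-- The Euler polynomials, via the recurrence `∑_{k<n} C(n,k) E_k(x) + 2 E_n(x) = 2 x^n`. -/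
noncomputable def eulerPoly (n : ℕ) (x : ℚ) : ℚ :=
  x ^ n - 1 / 2 * ∑ k ∈ (Finset.range n).attach, (n.choose k.1 : ℚ) * eulerPoly k.1 x
  termination_by n
  decreasing_by exact Finset.mem_range.mp k.2

/-- The periodic Euler function `Ē_m`, with `Ē_m(x) = E_m(x)` on `[0,1)` and
`Ē_m(x+1) = -Ē_m(x)`. -/
noncomputable def periodicEuler (m : ℕ) (x : ℚ) : ℚ :=
  (-1 : ℚ) ^ ⌊x⌋ * eulerPoly m (Int.fract x)

section myAux
variable {p}

lemma my_norm_le_inv_p {x : ℚ_[p]} (h : ‖x‖ < 1) : ‖x‖ ≤ (p : ℝ)⁻¹ := by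
  have := (Padic.norm_lt_pow_iff_norm_le_pow_sub_one x 0).mp (by simpa using h)
  simpa using this

lemma my_norm_q {q : ℚ_[p]} (h : ‖1 - q‖ < 1) : ‖q‖ = 1 := by
  have h1 : ‖(1 : ℚ_[p])‖ ≠ ‖-(1 - q)‖ := by
    rw [norm_neg, norm_one]; exact fun e => absurd e.symm (ne_of_lt h)
  have hq : q = 1 + -(1 - q) := by ring
  rw [hq, Padic.add_eq_max_of_ne h1, norm_neg, norm_one]
  exact max_eq_left h.le

lemma my_norm_one_sub_pow {q : ℚ_[p]} (h : ‖1 - q‖ < 1) (j : ℕ) :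
    ‖1 - q ^ j‖ ≤ ‖1 - q‖ := by
  induction j with
  | zero => simp [norm_nonneg]
  | succ n ih =>
    have e : 1 - q ^ (n + 1) = (1 - q) + q * (1 - q ^ n) := by ring
    rw [e]
    refine le_trans (Padic.nonarchimedean _ _) (max_le le_rfl ?_)
    rw [norm_mul, my_norm_q h, one_mul]; exact ih

lemma my_norm_nat (hpm : ¬ p ∣ m) : ‖((m : ℕ) : ℚ_[p])‖ = 1 := by
  have h1 : ‖((m : ℤ) : ℚ_[p])‖ ≤ 1 := Padic.norm_int_le_one _
  have h2 : ¬ ‖((m : ℤ) : ℚ_[p])‖ < 1 := by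
    rw [Padic.norm_intCast_lt_one_iff]
    exact_mod_cast hpm
  push_cast at h1 h2 ⊢
  linarith

lemma my_norm_two (hp2 : p ≠ 2) : ‖(2 : ℚ_[p])‖ = 1 := by
  have := my_norm_nat (p := p) (m := 2) (fun hdvd =>
    hp2 ((Nat.prime_dvd_prime_iff_eq Fact.out Nat.prime_two).mp hdvd))
  exact_mod_cast this

lemma my_one_add_pow_norm (hp2 : p ≠ 2) {q : ℚ_[p]} (h : ‖1 - q‖ < 1) (j : ℕ) :
    ‖1 + q ^ j‖ = 1 := by
  have h1 : ‖(2 : ℚ_[p])‖ ≠ ‖-(1 - q ^ j)‖ := by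
    rw [norm_neg, my_norm_two hp2]
    exact fun e => absurd e.symm (ne_of_lt (lt_of_le_of_lt (my_norm_one_sub_pow h j) h))
  have hq : 1 + q ^ j = 2 + -(1 - q ^ j) := by ring
  rw [hq, Padic.add_eq_max_of_ne h1, norm_neg, my_norm_two hp2]
  exact max_eq_left (le_of_lt (lt_of_le_of_lt (my_norm_one_sub_pow h j) h))

lemma my_one_add_pow_ne (hp2 : p ≠ 2) {q : ℚ_[p]} (h : ‖1 - q‖ < 1) (j : ℕ) :
    1 + q ^ j ≠ 0 := by
  intro h0
  have := my_one_add_pow_norm hp2 h j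
  rw [h0, norm_zero] at this; norm_num at this

lemma my_neg_pow_ne_one (hp2 : p ≠ 2) {q : ℚ_[p]} (h : ‖1 - q‖ < 1) (j : ℕ) :
    -(q ^ j) ≠ 1 := by
  intro h0
  exact my_one_add_pow_ne hp2 h j (by rw [← h0]; ring)

lemma my_choose_norm_le (hdvd : p ∣ n) : ‖(n : ℚ_[p])‖ ≤ (p : ℝ)⁻¹ := by
  have hlt : ‖((n : ℤ) : ℚ_[p])‖ < 1 := by
    rw [Padic.norm_intCast_lt_one_iff]; exact_mod_cast hdvd
  have := (Padic.norm_lt_pow_iff_norm_le_pow_sub_one ((n : ℤ) : ℚ_[p]) 0).mp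
    (by simpa using hlt)
  push_cast at this ⊢
  simpa using this

lemma my_pow_p_sub (hp2 : p ≠ 2) {u : ℚ_[p]} (hu : ‖u‖ ≤ (p : ℝ)⁻¹) :
    ‖(1 + u) ^ p - 1 - p * u‖ ≤ ‖u‖ * (p : ℝ)⁻¹ * (p : ℝ)⁻¹ := by
  have hp : p.Prime := Fact.out
  have hp3 : 3 ≤ p := hp.two_le.lt_of_ne (Ne.symm hp2)
  have hppos : (0:ℝ) < p := by exact_mod_cast hp.pos
  have hinv1 : (p : ℝ)⁻¹ ≤ 1 := by
    rw [inv_le_one_iff₀]; right; exact_mod_cast hp.one_lt.le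
  have hu1 : ‖u‖ ≤ 1 := hu.trans hinv1
  have hexp : (1 + u) ^ p - 1 - p * u = ∑ i ∈ Ico 2 (p + 1), u ^ i * (p.choose i : ℚ_[p]) := by
    have h0 := add_pow u 1 p
    simp only [one_pow, mul_one] at h0
    rw [add_comm u 1] at h0
    have hsplit := Finset.sum_Ico_consecutive (fun i => u ^ i * (p.choose i : ℚ_[p]))
      (by omega : 0 ≤ 2) (by omega : 2 ≤ p + 1)
    rw [h0, range_eq_Ico, ← hsplit]
    have h2 : ∑ i ∈ range 2, u ^ i * (p.choose i : ℚ_[p]) = 1 + p * u := by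
      rw [Finset.sum_range_succ, Finset.sum_range_one]
      simp [Nat.choose_one_right]
      ring
    rw [show Ico 0 2 = range 2 by rw [range_eq_Ico], h2]; ring
  rw [hexp]
  apply IsUltrametricDist.norm_sum_le_of_forall_le_of_nonneg
  · positivity
  · intro i hi
    rw [Finset.mem_Ico] at hi
    rw [norm_mul, norm_pow]
    have key : ∀ j : ℕ, 2 ≤ j → ‖u‖ ^ j ≤ ‖u‖ * (p:ℝ)⁻¹ := by
      intro j hj
      calc ‖u‖ ^ j = ‖u‖ * ‖u‖ ^ (j - 1) := by rw [← pow_succ']; congr 1; omega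
        _ ≤ ‖u‖ * (p:ℝ)⁻¹ := by
            apply mul_le_mul_of_nonneg_left _ (norm_nonneg u)
            calc ‖u‖ ^ (j-1) ≤ ‖u‖ ^ 1 := by
                  apply pow_le_pow_of_le_one (norm_nonneg u) hu1; omega
              _ = ‖u‖ := pow_one _
              _ ≤ (p:ℝ)⁻¹ := hu
    rcases eq_or_lt_of_le (Nat.lt_succ_iff.mp hi.2) with hip | hip
    · -- i = p
      rw [hip, Nat.choose_self]
      simp only [Nat.cast_one, norm_one, mul_one]
      calc ‖u‖ ^ p = ‖u‖ ^ (p - 1) * ‖u‖ := by rw [← pow_succ]; congr 1; omega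
        _ ≤ (‖u‖ ^ 2) * (p:ℝ)⁻¹ := by
            apply mul_le_mul _ hu (norm_nonneg _) (by positivity)
            apply pow_le_pow_of_le_one (norm_nonneg u) hu1; omega
        _ ≤ (‖u‖ * (p:ℝ)⁻¹) * (p:ℝ)⁻¹ := by
            apply mul_le_mul_of_nonneg_right _ (by positivity)
            rw [sq]
            exact mul_le_mul_of_nonneg_left hu (norm_nonneg u)
        _ = ‖u‖ * (p:ℝ)⁻¹ * (p:ℝ)⁻¹ := by ring
    · -- 2 ≤ i < p
      have hdvd : p ∣ p.choose i := hp.dvd_choose_self (by omega) hip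
      calc ‖u‖ ^ i * ‖(p.choose i : ℚ_[p])‖
          ≤ (‖u‖ * (p:ℝ)⁻¹) * (p:ℝ)⁻¹ :=
            mul_le_mul (key i hi.1) (my_choose_norm_le hdvd) (norm_nonneg _) (by positivity)
        _ = ‖u‖ * (p:ℝ)⁻¹ * (p:ℝ)⁻¹ := by ring

lemma my_pinv_lt_one (hp2 : p ≠ 2) : (p : ℝ)⁻¹ < 1 := by
  have hp : p.Prime := Fact.out
  rw [inv_lt_one_iff₀]; right; exact_mod_cast hp.one_lt

lemma my_pow_p_le (hp2 : p ≠ 2) {u : ℚ_[p]} (hu : ‖u‖ ≤ (p : ℝ)⁻¹) :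
    ‖(1 + u) ^ p - 1‖ ≤ ‖u‖ * (p : ℝ)⁻¹ := by
  have hp : p.Prime := Fact.out
  have hppos : (0:ℝ) < (p:ℝ)⁻¹ := by
    have : (0:ℝ) < p := by exact_mod_cast hp.pos
    positivity
  have e : (1 + u) ^ p - 1 = p * u + ((1 + u) ^ p - 1 - p * u) := by ring
  rw [e]
  refine le_trans (Padic.nonarchimedean _ _) (max_le ?_ ?_)
  · rw [norm_mul, Padic.norm_p]; linarith [norm_nonneg u,
      mul_comm ((p:ℝ)⁻¹) ‖u‖]
  · refine le_trans (my_pow_p_sub hp2 hu) ?_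
    have := mul_le_of_le_one_right (by positivity : (0:ℝ) ≤ ‖u‖ * (p:ℝ)⁻¹)
      (le_of_lt (my_pinv_lt_one hp2))
    linarith

lemma my_pow_p_eq (hp2 : p ≠ 2) {u : ℚ_[p]} (hu0 : u ≠ 0) (hu : ‖u‖ ≤ (p : ℝ)⁻¹) :
    ‖(1 + u) ^ p - 1‖ = ‖u‖ * (p : ℝ)⁻¹ := by
  have hp : p.Prime := Fact.out
  have hppos : (0:ℝ) < (p:ℝ)⁻¹ := by
    have : (0:ℝ) < p := by exact_mod_cast hp.pos
    positivity
  have hu0' : (0:ℝ) < ‖u‖ := norm_pos_iff.mpr hu0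
  have key : ‖u‖ * (p:ℝ)⁻¹ * (p:ℝ)⁻¹ < ‖u‖ * (p:ℝ)⁻¹ := by
    have := mul_lt_mul_of_pos_left (my_pinv_lt_one hp2)
      (show (0:ℝ) < ‖u‖ * (p:ℝ)⁻¹ by positivity)
    simpa [mul_assoc] using this
  have e : (1 + u) ^ p - 1 = p * u + ((1 + u) ^ p - 1 - p * u) := by ring
  have hne : ‖(p : ℚ_[p]) * u‖ ≠ ‖(1 + u) ^ p - 1 - p * u‖ := by
    have h1 : ‖(p : ℚ_[p]) * u‖ = ‖u‖ * (p:ℝ)⁻¹ := by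
      rw [norm_mul, Padic.norm_p]; ring
    have h2 : ‖(1 + u) ^ p - 1 - p * u‖ < ‖u‖ * (p:ℝ)⁻¹ := by
      exact lt_of_le_of_lt (my_pow_p_sub hp2 hu) key
    rw [h1]; exact fun hh => absurd (hh ▸ h2) (lt_irrefl _)
  rw [e, Padic.add_eq_max_of_ne hne]
  have h1 : ‖(p : ℚ_[p]) * u‖ = ‖u‖ * (p:ℝ)⁻¹ := by
    rw [norm_mul, Padic.norm_p]; ring
  rw [h1]
  apply max_eq_left
  exact le_trans (my_pow_p_sub hp2 hu) key.le

lemma my_norm_pow_p_pow_le (hp2 : p ≠ 2) {q : ℚ_[p]} (h : ‖1 - q‖ < 1) (N : ℕ) :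
    ‖q ^ p ^ N - 1‖ ≤ ‖1 - q‖ * ((p : ℝ)⁻¹) ^ N := by
  have hp : p.Prime := Fact.out
  have hppos : (0:ℝ) < (p:ℝ)⁻¹ := by
    have : (0:ℝ) < p := by exact_mod_cast hp.pos; 
    positivity
  have hq1 : ‖1 - q‖ ≤ (p:ℝ)⁻¹ := my_norm_le_inv_p h
  induction N with
  | zero => simp [norm_sub_rev]
  | succ n ih =>
    have hle : ‖q ^ p ^ n - 1‖ ≤ (p:ℝ)⁻¹ := by
      refine le_trans ih ?_
      calc ‖1 - q‖ * ((p:ℝ)⁻¹) ^ n ≤ (p:ℝ)⁻¹ * 1 := by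
            apply mul_le_mul hq1 _ (by positivity) (by positivity)
            exact pow_le_one₀ (le_of_lt hppos) (le_of_lt (my_pinv_lt_one hp2))
        _ = (p:ℝ)⁻¹ := mul_one _
    have e : q ^ p ^ (n+1) = (1 + (q ^ p ^ n - 1)) ^ p := by
      rw [add_sub_cancel, ← pow_mul, pow_succ]
    rw [e]
    refine le_trans (my_pow_p_le hp2 hle) ?_
    calc ‖q ^ p ^ n - 1‖ * (p:ℝ)⁻¹ ≤ (‖1 - q‖ * ((p:ℝ)⁻¹) ^ n) * (p:ℝ)⁻¹ :=
          mul_le_mul_of_nonneg_right ih (le_of_lt hppos)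
      _ = ‖1 - q‖ * ((p:ℝ)⁻¹) ^ (n+1) := by ring

lemma my_tendsto_pow_p_pow (hp2 : p ≠ 2) {q : ℚ_[p]} (h : ‖1 - q‖ < 1) :
    Tendsto (fun N => q ^ p ^ N) atTop (𝓝 1) := by
  have hp : p.Prime := Fact.out
  have hppos : (0:ℝ) < (p:ℝ)⁻¹ := by
    have : (0:ℝ) < p := by exact_mod_cast hp.pos
    positivity
  rw [tendsto_iff_norm_sub_tendsto_zero]
  have hg : Tendsto (fun N : ℕ => ‖1 - q‖ * ((p : ℝ)⁻¹) ^ N) atTop (𝓝 0) := by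
    rw [show (0:ℝ) = ‖1 - q‖ * 0 by ring]
    exact (tendsto_pow_atTop_nhds_zero_of_lt_one (le_of_lt hppos)
      (my_pinv_lt_one hp2)).const_mul _
  exact squeeze_zero (fun N => norm_nonneg _) (fun N => my_norm_pow_p_pow_le hp2 h N) hg

lemma my_pow_ne_one (hp2 : p ≠ 2) {q : ℚ_[p]} (h : ‖1 - q‖ < 1) (hq1 : q ≠ 1) :
    ∀ m : ℕ, 0 < m → q ^ m ≠ 1 := by
  intro m
  induction m using Nat.strong_induction_on generalizing q with
  | _ m ih =>
    intro hm0
    by_cases hpm : p ∣ m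
    · obtain ⟨m', rfl⟩ := hpm
      have hp : p.Prime := Fact.out
      have hm' : 0 < m' := Nat.pos_of_ne_zero (by rintro rfl; simp at hm0)
      have hu0 : q - 1 ≠ 0 := sub_ne_zero.mpr hq1
      have heq : ‖q ^ p - 1‖ = ‖q - 1‖ * (p:ℝ)⁻¹ := by
        have := my_pow_p_eq hp2 hu0 (by rw [← norm_neg, neg_sub]; exact my_norm_le_inv_p h)
        rwa [add_sub_cancel] at this
      have hqp1 : q ^ p ≠ 1 := by
        intro hcontra
        rw [hcontra, sub_self, norm_zero] at heq
        have : ‖q - 1‖ > 0 := norm_pos_iff.mpr hu0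
        have hppos : (0:ℝ) < (p:ℝ)⁻¹ := by
          have : (0:ℝ) < p := by exact_mod_cast hp.pos
          positivity
        nlinarith
      have hnormp : ‖1 - q ^ p‖ < 1 := by
        rw [← norm_neg, neg_sub, heq]
        calc ‖q - 1‖ * (p:ℝ)⁻¹ < 1 * 1 := by
              apply mul_lt_mul' _ (my_pinv_lt_one hp2) (by positivity) one_pos
              rw [← norm_neg, neg_sub]; exact h.le
          _ = 1 := mul_one 1
      have hm'lt : m' < p * m' := (lt_mul_iff_one_lt_left hm').mpr hp.one_lt
      rw [pow_mul]
      exact ih m' hm'lt hnormp hqp1 hm'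
    · intro hcontra
      have hgeom : (∑ i ∈ range m, q ^ i) * (q - 1) = q ^ m - 1 := geom_sum_mul q m
      have hsum_ne : (∑ i ∈ range m, q ^ i) ≠ 0 := by
        have hdiff : ‖(∑ i ∈ range m, q ^ i) - (m : ℚ_[p])‖ < 1 := by
          have : (∑ i ∈ range m, q ^ i) - (m : ℚ_[p]) = ∑ i ∈ range m, (q ^ i - 1) := by
            rw [Finset.sum_sub_distrib]
            simp
          rw [this]
          refine lt_of_le_of_lt ?_ h
          apply IsUltrametricDist.norm_sum_le_of_forall_le_of_nonneg (norm_nonneg _)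
          intro i _
          rw [← norm_neg, neg_sub]
          exact my_norm_one_sub_pow h i
        have hm1 : ‖(m : ℚ_[p])‖ = 1 := my_norm_nat hpm
        have hne : ‖(m : ℚ_[p])‖ ≠ ‖(∑ i ∈ range m, q ^ i) - (m : ℚ_[p])‖ := by
          rw [hm1]; exact fun e => absurd e.symm (ne_of_lt hdiff)
        have : ‖(∑ i ∈ range m, q ^ i)‖ = 1 := by
          have e : (∑ i ∈ range m, q ^ i) = (m : ℚ_[p]) + ((∑ i ∈ range m, q ^ i) - m) := by ring
          rw [e, Padic.add_eq_max_of_ne hne, hm1]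
          exact max_eq_left hdiff.le
        intro h0; rw [h0, norm_zero] at this; norm_num at this
      have : q ^ m - 1 ≠ 0 := hgeom ▸ mul_ne_zero hsum_ne (sub_ne_zero.mpr hq1)
      exact this (by rw [hcontra, sub_self])

lemma my_closedForm (hp2 : p ≠ 2) {q : ℚ_[p]} (h : ‖1 - q‖ < 1) (k : ℕ) (qx : ℚ_[p]) :
    qEulerPoly p q k qx =
      (1 + q) * ((1 - q) ^ k)⁻¹ *
        ∑ j ∈ range (k + 1), (k.choose j : ℚ_[p]) * (-qx) ^ j * (1 + q ^ j)⁻¹ := by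
  have hp : p.Prime := Fact.out
  have hq0 : q ≠ 0 := by
    intro h0; have := my_norm_q h; rw [h0, norm_zero] at this; norm_num at this
  have h2ne : (1 + 1 : ℚ_[p]) ≠ 0 := by norm_num
  -- per-N identity
  have key : ∀ N, (1 + q) / (1 + q ^ p ^ N) *
      ∑ t ∈ range (p ^ N), (q ^ t)⁻¹ * ((1 - qx * q ^ t) / (1 - q)) ^ k * (-q) ^ t
      = (1 + q) * (1 + q ^ p ^ N)⁻¹ *
        (((1 - q) ^ k)⁻¹ * ∑ j ∈ range (k + 1), (k.choose j : ℚ_[p]) * (-qx) ^ j *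
          (((q ^ j) ^ p ^ N + 1) * (q ^ j + 1)⁻¹)) := by
    intro N
    set P := p ^ N with hP
    have hPodd : Odd P := Odd.pow (hp.odd_of_ne_two hp2)
    have step1 : ∀ t, (q ^ t)⁻¹ * ((1 - qx * q ^ t) / (1 - q)) ^ k * (-q) ^ t
        = ∑ j ∈ range (k + 1),
            ((k.choose j : ℚ_[p]) * (-qx) ^ j * ((1 - q) ^ k)⁻¹) * (-(q ^ j)) ^ t := by
      intro t
      have hbin : (1 - qx * q ^ t) ^ k
          = ∑ j ∈ range (k + 1), (-qx) ^ j * (q ^ j) ^ t * (k.choose j : ℚ_[p]) := by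
        have h0 := add_pow (-(qx * q ^ t)) 1 k
        simp only [one_pow, mul_one] at h0
        rw [show -(qx * q ^ t) + 1 = 1 - qx * q ^ t by ring] at h0
        rw [h0]
        refine Finset.sum_congr rfl fun j _ => ?_
        rw [show -(qx * q ^ t) = (-qx) * q ^ t by ring, mul_pow, ← pow_mul, ← pow_mul,
          mul_comm t j]
      calc (q ^ t)⁻¹ * ((1 - qx * q ^ t) / (1 - q)) ^ k * (-q) ^ t
          = (1 - qx * q ^ t) ^ k * ((1 - q) ^ k)⁻¹ * ((-1) ^ t * ((q ^ t)⁻¹ * q ^ t)) := by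
            rw [div_pow, div_eq_mul_inv, neg_pow]; ring
        _ = (1 - qx * q ^ t) ^ k * ((1 - q) ^ k)⁻¹ * (-1) ^ t := by
            rw [inv_mul_cancel₀ (pow_ne_zero t hq0), mul_one]
        _ = ∑ j ∈ range (k + 1),
              ((k.choose j : ℚ_[p]) * (-qx) ^ j * ((1 - q) ^ k)⁻¹) * ((-1) ^ t * (q ^ j) ^ t) := by
            rw [hbin, Finset.sum_mul, Finset.sum_mul]
            exact Finset.sum_congr rfl fun j _ => by ring
        _ = _ := by
            refine Finset.sum_congr rfl fun j _ => ?_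
            rw [show -(q ^ j) = (-1) * q ^ j by ring, mul_pow]
    have hsum : ∑ t ∈ range P, (q ^ t)⁻¹ * ((1 - qx * q ^ t) / (1 - q)) ^ k * (-q) ^ t
        = ((1 - q) ^ k)⁻¹ * ∑ j ∈ range (k + 1), (k.choose j : ℚ_[p]) * (-qx) ^ j *
            (((q ^ j) ^ P + 1) * (q ^ j + 1)⁻¹) := by
      rw [Finset.sum_congr rfl (fun t _ => step1 t), Finset.sum_comm, Finset.mul_sum]
      refine Finset.sum_congr rfl fun j _ => ?_
      rw [← Finset.mul_sum, geom_sum_eq (my_neg_pow_ne_one hp2 h j) P, hPodd.neg_pow,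
        show -((q ^ j) ^ P) - 1 = -((q ^ j) ^ P + 1) by ring,
        show -(q ^ j) - 1 = -(q ^ j + 1) by ring, neg_div_neg_eq, div_eq_mul_inv]
      ring
    rw [hsum, div_eq_mul_inv]
  -- the limit
  have htend : Tendsto (fun N => (1 + q) / (1 + q ^ p ^ N) *
      ∑ t ∈ range (p ^ N), (q ^ t)⁻¹ * ((1 - qx * q ^ t) / (1 - q)) ^ k * (-q) ^ t) atTop
      (𝓝 ((1 + q) * (1 + 1)⁻¹ * (((1 - q) ^ k)⁻¹ * ∑ j ∈ range (k + 1),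
        (k.choose j : ℚ_[p]) * (-qx) ^ j * ((1 + 1) * (q ^ j + 1)⁻¹)))) := by
    rw [show (fun N => (1 + q) / (1 + q ^ p ^ N) *
      ∑ t ∈ range (p ^ N), (q ^ t)⁻¹ * ((1 - qx * q ^ t) / (1 - q)) ^ k * (-q) ^ t)
      = fun N => (1 + q) * (1 + q ^ p ^ N)⁻¹ *
        (((1 - q) ^ k)⁻¹ * ∑ j ∈ range (k + 1), (k.choose j : ℚ_[p]) * (-qx) ^ j *
          (((q ^ j) ^ p ^ N + 1) * (q ^ j + 1)⁻¹)) from funext key]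
    have t1 : Tendsto (fun N => (1 + q) * (1 + q ^ p ^ N)⁻¹) atTop (𝓝 ((1 + q) * (1 + 1)⁻¹)) := by
      apply Tendsto.const_mul
      exact ((tendsto_const_nhds.add (my_tendsto_pow_p_pow hp2 h)).inv₀ h2ne)
    refine t1.mul (Tendsto.const_mul _ ?_)
    apply tendsto_finset_sum
    intro j _
    have hj : ‖1 - q ^ j‖ < 1 := lt_of_le_of_lt (my_norm_one_sub_pow h j) h
    have t2 : Tendsto (fun N => (q ^ j) ^ p ^ N + 1) atTop (𝓝 (1 + 1)) :=
      (my_tendsto_pow_p_pow hp2 hj).add tendsto_const_nhds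
    exact (Tendsto.const_mul _ (t2.mul_const _))
  rw [qEulerPoly, htend.limUnder_eq]
  rw [show ∑ j ∈ range (k + 1), (k.choose j : ℚ_[p]) * (-qx) ^ j * ((1 + 1) * (q ^ j + 1)⁻¹)
      = (1 + 1) * ∑ j ∈ range (k + 1), (k.choose j : ℚ_[p]) * (-qx) ^ j * (1 + q ^ j)⁻¹ by
    rw [Finset.mul_sum]; exact Finset.sum_congr rfl fun j _ => by rw [add_comm (q ^ j) 1]; ring]
  rw [show (1 + q) * (1 + 1)⁻¹ * (((1 - q) ^ k)⁻¹ * ((1 + 1) *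
      ∑ j ∈ range (k + 1), (k.choose j : ℚ_[p]) * (-qx) ^ j * (1 + q ^ j)⁻¹))
      = ((1 + 1)⁻¹ * (1 + 1)) * ((1 + q) * ((1 - q) ^ k)⁻¹ *
      ∑ j ∈ range (k + 1), (k.choose j : ℚ_[p]) * (-qx) ^ j * (1 + q ^ j)⁻¹) by ring,
    inv_mul_cancel₀ h2ne, one_mul]

end myAux

/-- Multiplication (distribution) formula for the `q`-Euler polynomials: for odd `m > 0`,
`E_{k,q}(x) = [m]_q^k (1+q)/(1+q^m) ∑_{i<m} (-1)^i E_{k,q^m}((x+i)/m)`. -/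
theorem qEulerPoly_multiplication (hp2 : p ≠ 2) (q : ℚ_[p]) (hq : ‖1 - q‖ < 1)
    (m : ℕ) (hm : Odd m) (hm0 : 0 < m) (x : ℤ_[p]) (k : ℕ) :
    qEulerPoly p q k (qpowZ p q x) =
      ((1 - q ^ m) / (1 - q)) ^ k * ((1 + q) / (1 + q ^ m)) *
        ∑ i ∈ range m, (-1 : ℚ_[p]) ^ i * qEulerPoly p (q ^ m) k (qpowZ p q x * q ^ i) := by
  set qx := qpowZ p q x with hqx
  clear_value qx
  have hqm : ‖1 - q ^ m‖ < 1 := lt_of_le_of_lt (my_norm_one_sub_pow hq m) hq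
  rw [my_closedForm hp2 hq k qx]
  rw [show (fun i => (-1 : ℚ_[p]) ^ i * qEulerPoly p (q ^ m) k (qx * q ^ i))
      = fun i => (-1 : ℚ_[p]) ^ i * ((1 + q ^ m) * ((1 - q ^ m) ^ k)⁻¹ *
        ∑ j ∈ range (k + 1), (k.choose j : ℚ_[p]) * (-(qx * q ^ i)) ^ j * (1 + (q ^ m) ^ j)⁻¹)
      from funext fun i => by rw [my_closedForm hp2 hqm k (qx * q ^ i)]]
  have hdouble : ∑ i ∈ range m, (-1 : ℚ_[p]) ^ i * ((1 + q ^ m) * ((1 - q ^ m) ^ k)⁻¹ *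
      ∑ j ∈ range (k + 1), (k.choose j : ℚ_[p]) * (-(qx * q ^ i)) ^ j * (1 + (q ^ m) ^ j)⁻¹)
      = (1 + q ^ m) * ((1 - q ^ m) ^ k)⁻¹ *
        ∑ j ∈ range (k + 1), (k.choose j : ℚ_[p]) * (-qx) ^ j * (1 + q ^ j)⁻¹ := by
    have step : ∀ i ∈ range m, (-1 : ℚ_[p]) ^ i * ((1 + q ^ m) * ((1 - q ^ m) ^ k)⁻¹ *
        ∑ j ∈ range (k + 1), (k.choose j : ℚ_[p]) * (-(qx * q ^ i)) ^ j * (1 + (q ^ m) ^ j)⁻¹)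
        = ∑ j ∈ range (k + 1), ((1 + q ^ m) * ((1 - q ^ m) ^ k)⁻¹ *
            ((k.choose j : ℚ_[p]) * (-qx) ^ j * (1 + (q ^ m) ^ j)⁻¹)) * (-(q ^ j)) ^ i := by
      intro i _
      rw [Finset.mul_sum, Finset.mul_sum]
      refine Finset.sum_congr rfl fun j _ => ?_
      rw [show -(qx * q ^ i) = (-qx) * q ^ i by ring, mul_pow, ← pow_mul, ← pow_mul,
        mul_comm i j, pow_mul, pow_mul, show -(q ^ j) = (-1) * q ^ j by ring, mul_pow]
      ring
    rw [Finset.sum_congr rfl step, Finset.sum_comm]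
    rw [show (1 + q ^ m) * ((1 - q ^ m) ^ k)⁻¹ *
        ∑ j ∈ range (k + 1), (k.choose j : ℚ_[p]) * (-qx) ^ j * (1 + q ^ j)⁻¹
        = ∑ j ∈ range (k + 1), (1 + q ^ m) * ((1 - q ^ m) ^ k)⁻¹ *
          ((k.choose j : ℚ_[p]) * (-qx) ^ j * (1 + q ^ j)⁻¹) from by
      rw [Finset.mul_sum]]
    refine Finset.sum_congr rfl fun j _ => ?_
    rw [← Finset.mul_sum, geom_sum_eq (my_neg_pow_ne_one hp2 hq j) m, hm.neg_pow,
      show -((q ^ j) ^ m) - 1 = -((q ^ j) ^ m + 1) by ring,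
      show -(q ^ j) - 1 = -(q ^ j + 1) by ring, neg_div_neg_eq, div_eq_mul_inv]
    have hpm' : (1 : ℚ_[p]) + q ^ (m * j) ≠ 0 := by
      rw [pow_mul]; exact my_one_add_pow_ne hp2 hqm j
    have hcanc : (1 + (q ^ m) ^ j)⁻¹ * ((q ^ j) ^ m + 1) = 1 := by
      rw [← pow_mul, ← pow_mul, mul_comm j m, add_comm (q ^ (m * j)) 1]
      exact inv_mul_cancel₀ hpm'
    calc (1 + q ^ m) * ((1 - q ^ m) ^ k)⁻¹ *
          ((k.choose j : ℚ_[p]) * (-qx) ^ j * (1 + (q ^ m) ^ j)⁻¹) *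
          (((q ^ j) ^ m + 1) * (q ^ j + 1)⁻¹)
        = (1 + q ^ m) * ((1 - q ^ m) ^ k)⁻¹ *
          ((k.choose j : ℚ_[p]) * (-qx) ^ j * (q ^ j + 1)⁻¹) *
          ((1 + (q ^ m) ^ j)⁻¹ * ((q ^ j) ^ m + 1)) := by ring
      _ = (1 + q ^ m) * ((1 - q ^ m) ^ k)⁻¹ *
          ((k.choose j : ℚ_[p]) * (-qx) ^ j * (1 + q ^ j)⁻¹) := by
          rw [hcanc, mul_one, add_comm (q ^ j) 1]
  rw [hdouble]
  set S := ∑ j ∈ range (k + 1), (k.choose j : ℚ_[p]) * (-qx) ^ j * (1 + q ^ j)⁻¹ with hS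
  clear_value S
  by_cases hq1 : q = 1
  · subst hq1
    rcases Nat.eq_zero_or_pos k with rfl | hk
    · norm_num
    · simp [zero_pow (Nat.pos_iff_ne_zero.mp hk), sub_self]
  · have h1q : (1 : ℚ_[p]) - q ≠ 0 := sub_ne_zero.mpr (Ne.symm hq1)
    have h1qm : (1 : ℚ_[p]) - q ^ m ≠ 0 :=
      sub_ne_zero.mpr (Ne.symm (my_pow_ne_one hp2 hq hq1 m hm0))
    have h3 : (1 : ℚ_[p]) + q ^ m ≠ 0 := my_one_add_pow_ne hp2 hq m
    rw [div_pow]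
    field_simp
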